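/- arXiv:2505.19639 — 3 statements merged into one kernel-verified Lean document; each statement's English description precedes it below -/
import Mathlib

section
/- The TLS state-space realization Â_tls (companion matrix built from the TLS solution â_tls) and the range-space-based realization Â_R = (Ô⁺)† Ô⁻ are similar matrices: there exists an invertible T with Â_tls = T⁻¹ Â_R T. Equivalently, both matrices have the same characteristic polynomial, whose coefficients are given by the entries of â_tls. -/
open Matrix


noncomputable section TLSAux6
open Polynomial

/-- bottom-row companion matrix -/
def cmpn (m : ℕ) (a : Fin m → ℝ) : Matrix (Fin m) (Fin m) ℝ :=
  Matrix.of fun i j =>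
    (if (j : ℕ) = (i : ℕ) + 1 then (1:ℝ) else 0) - (if (i : ℕ) = m - 1 then a j else 0)

def cmpX (m : ℕ) (a : Fin m → ℝ) : Matrix (Fin m) (Fin m) ℝ[X] :=
  Matrix.of fun i j =>
    (if (i : ℕ) = (j : ℕ) then (X : ℝ[X]) else 0)
      - (if (j : ℕ) = (i : ℕ) + 1 then 1 else 0)
      + (if (i : ℕ) = m - 1 then C (a j) else 0)

lemma charmatrix_cmpn (m : ℕ) (a : Fin m → ℝ) :
    charmatrix (cmpn m a) = cmpX m a := by
  refine Matrix.ext fun i j => ?_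
  simp only [charmatrix_apply, cmpn, cmpX, Matrix.of_apply, Matrix.diagonal_apply, map_sub,
    apply_ite C, _root_.map_one, map_zero]
  have : (i = j) = ((i : ℕ) = (j : ℕ)) := by simp [Fin.ext_iff]
  simp only [this]
  ring

lemma det_cmpX : ∀ (m : ℕ) (a : Fin m → ℝ),
    (cmpX m a).det = X ^ m + ∑ j : Fin m, C (a j) * X ^ (j : ℕ) := by
  intro m
  induction m with
  | zero => intro a; simp [Matrix.det_fin_zero]
  | succ m ih =>
    intro a
    match m, ih with
    | 0, _ =>
      simp [cmpX, Matrix.det_fin_one, Fin.sum_univ_one]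
    | Nat.succ m, ih =>
      rw [Matrix.det_succ_column_zero, Fin.sum_univ_succ]
      have h00 : cmpX (m+2) a 0 0 = X := by
        simp [cmpX]
      have hminor0 : (cmpX (m+2) a).submatrix (Fin.succAbove 0) Fin.succ
          = cmpX (m+1) (a ∘ Fin.succ) := by
        refine Matrix.ext fun i j => ?_
        simp only [cmpX, Matrix.submatrix_apply, Matrix.of_apply, Fin.zero_succAbove,
          Fin.val_succ, Function.comp_apply]
        have h1 : ((i : ℕ) + 1 = (j : ℕ) + 1) = ((i : ℕ) = (j : ℕ)) := by simp
        have h2 : ((j : ℕ) + 1 = (i : ℕ) + 1 + 1) = ((j : ℕ) = (i : ℕ) + 1) := by simp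
        have h3 : ((i : ℕ) + 1 = m + 2 - 1) = ((i : ℕ) = m + 1 - 1) := by
          simp only [eq_iff_iff]; omega
        simp only [h1, h2, h3]
      have hrest : ∀ i : Fin (m+1), i ≠ Fin.last m →
          (-1 : ℝ[X]) ^ ((Fin.succ i : Fin (m+2)) : ℕ) * cmpX (m+2) a (Fin.succ i) 0 *
            ((cmpX (m+2) a).submatrix (Fin.succAbove (Fin.succ i)) Fin.succ).det = 0 := by
        intro i hi
        have hv : (i : ℕ) ≠ m := fun h => hi (Fin.ext (by simp [h, Fin.last]))
        have : cmpX (m+2) a (Fin.succ i) 0 = 0 := by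
          simp [cmpX, hv]
        simp only [this]; ring
      rw [Finset.sum_eq_single_of_mem (Fin.last m) (Finset.mem_univ _)
        (fun i _ hi => hrest i hi)]
      have hlastentry : cmpX (m+2) a (Fin.succ (Fin.last m)) 0 = C (a 0) := by
        simp [cmpX]
      have hminorL : ((cmpX (m+2) a).submatrix
          (Fin.succAbove (Fin.succ (Fin.last m))) Fin.succ).det = (-1:ℝ[X])^(m+1) := by
        rw [Fin.succ_last, Fin.succAbove_last]
        set N := (cmpX (m+2) a).submatrix Fin.castSucc Fin.succ with hNdef
        have hN : ∀ i j : Fin (m+1), N i j =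
            (if (i:ℕ) = (j:ℕ)+1 then X else 0) - (if (j:ℕ) = (i:ℕ) then 1 else 0) := by
          intro i j
          simp only [hNdef, cmpX, Matrix.submatrix_apply, Matrix.of_apply, Fin.coe_castSucc,
            Fin.val_succ]
          have h1 : ((i:ℕ) = m + 2 - 1) = False := by
            simp only [eq_iff_iff, iff_false]; omega
          have h2 : ((j:ℕ)+1 = (i:ℕ)+1) = ((j:ℕ) = (i:ℕ)) := by simp
          simp only [h1, h2, if_false, add_zero]
        have htri : N.BlockTriangular OrderDual.toDual := by
          intro i j hij
          have hij' : (i:ℕ) < (j:ℕ) := hij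
          rw [hN]
          have h1 : ((i:ℕ) = (j:ℕ)+1) = False := by
            simp only [eq_iff_iff, iff_false]; omega
          have h2 : ((j:ℕ) = (i:ℕ)) = False := by
            simp only [eq_iff_iff, iff_false]; omega
          simp [h1, h2]
        rw [Matrix.det_of_lowerTriangular N htri]
        have : ∀ i : Fin (m+1), N i i = -1 := by
          intro i; rw [hN]; simp
        calc ∏ i : Fin (m+1), N i i = ∏ _i : Fin (m+1), (-1:ℝ[X]) :=
              Finset.prod_congr rfl fun i _ => this i
          _ = (-1:ℝ[X])^(m+1) := by simp [Finset.prod_const]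
      rw [h00, hminor0, ih (a ∘ Fin.succ), hlastentry, hminorL]
      simp only [Fin.val_zero, pow_zero, one_mul, Fin.val_succ, Fin.val_last]
      rw [Fin.sum_univ_succ (f := fun j : Fin (m+2) => C (a j) * X ^ (j:ℕ))]
      have hsq : ((-1:ℝ[X])^(m+1)) * ((-1:ℝ[X])^(m+1)) = 1 := by
        rw [← pow_add]
        exact Even.neg_one_pow ⟨m+1, by ring⟩
      have hsum : X * ∑ j : Fin (m+1), C ((a ∘ Fin.succ) j) * X ^ (j:ℕ)
          = ∑ j : Fin (m+1), C (a j.succ) * X ^ ((j:ℕ)+1) := by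
        rw [Finset.mul_sum]
        refine Finset.sum_congr rfl fun j _ => ?_
        simp only [Function.comp_apply]
        ring
      rw [mul_add, hsum]
      simp only [Fin.val_succ, Fin.val_zero, pow_zero, mul_one]
      calc X * X^(m+1) + ∑ j : Fin (m+1), C (a j.succ) * X ^ ((j:ℕ)+1)
            + (-1:ℝ[X])^(m+1) * C (a 0) * (-1:ℝ[X])^(m+1)
          = X^(m+2) + ∑ j : Fin (m+1), C (a j.succ) * X ^ ((j:ℕ)+1)
            + C (a 0) * (((-1:ℝ[X])^(m+1)) * ((-1:ℝ[X])^(m+1))) := by ring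
        _ = X ^ (m + 2) + (C (a 0) + ∑ j : Fin (m+1), C (a j.succ) * X ^ ((j:ℕ)+1)) := by
            rw [hsq]; ring

lemma charpoly_cmpn (m : ℕ) (a : Fin m → ℝ) :
    (cmpn m a).charpoly = X ^ m + ∑ j : Fin m, C (a j) * X ^ (j : ℕ) := by
  rw [Matrix.charpoly, charmatrix_cmpn, det_cmpX]

lemma coeff_cmp (m : ℕ) (a : Fin m → ℝ) (k : Fin m) :
    (X ^ m + ∑ j : Fin m, C (a j) * X ^ (j : ℕ)).coeff (k : ℕ) = a k := by
  rw [coeff_add, coeff_X_pow, if_neg (by omega : ¬ (k:ℕ) = m), finset_sum_coeff]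
  simp only [coeff_C_mul, coeff_X_pow]
  rw [Finset.sum_eq_single k]
  · simp
  · intro b _ hb
    have : ((k:ℕ) = (b:ℕ)) = False := by
      simp only [eq_iff_iff, iff_false]
      exact fun h => hb (Fin.ext h.symm)
    simp [this]
  · simp

lemma charpoly_conj' (m : ℕ) (P A : Matrix (Fin m) (Fin m) ℝ) (hP : IsUnit P) :
    (P⁻¹ * A * P).charpoly = A.charpoly := by
  have hdet : IsUnit P.det := (Matrix.isUnit_iff_isUnit_det P).mp hP
  have hmap : (C : ℝ →+* ℝ[X]).mapMatrix P⁻¹ * (C : ℝ →+* ℝ[X]).mapMatrix P = 1 := by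
    rw [← _root_.map_mul, Matrix.nonsing_inv_mul P hdet, _root_.map_one]
  have hcm : charmatrix (P⁻¹ * A * P)
      = (C : ℝ →+* ℝ[X]).mapMatrix P⁻¹ * charmatrix A * (C : ℝ →+* ℝ[X]).mapMatrix P := by
    unfold charmatrix
    rw [Matrix.mul_sub, Matrix.sub_mul, _root_.map_mul, _root_.map_mul]
    congr 1
    have hc : (Matrix.scalar (Fin m)) (X : ℝ[X]) * (C : ℝ →+* ℝ[X]).mapMatrix P
        = (C : ℝ →+* ℝ[X]).mapMatrix P * (Matrix.scalar (Fin m)) (X : ℝ[X]) := by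
      exact (Matrix.scalar_commute (X : ℝ[X]) (fun r => Commute.all _ _) _)
    rw [Matrix.mul_assoc, hc, ← Matrix.mul_assoc, hmap, Matrix.one_mul]
  rw [Matrix.charpoly, hcm, Matrix.det_mul, Matrix.det_mul, Matrix.charpoly]
  have h1 : ((C : ℝ →+* ℝ[X]).mapMatrix P⁻¹).det * ((C : ℝ →+* ℝ[X]).mapMatrix P).det = 1 := by
    rw [← Matrix.det_mul, hmap, Matrix.det_one]
  calc ((C : ℝ →+* ℝ[X]).mapMatrix P⁻¹).det * (charmatrix A).det
        * ((C : ℝ →+* ℝ[X]).mapMatrix P).det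
      = (charmatrix A).det * (((C : ℝ →+* ℝ[X]).mapMatrix P⁻¹).det
        * ((C : ℝ →+* ℝ[X]).mapMatrix P).det) := by ring
    _ = (charmatrix A).det := by rw [h1, mul_one]

def revM (m : ℕ) : Matrix (Fin m) (Fin m) ℝ :=
  Matrix.of fun i j => if j = Fin.rev i then 1 else 0

lemma revM_mul (m : ℕ) (M : Matrix (Fin m) (Fin m) ℝ) :
    revM m * M = M.submatrix Fin.rev id := by
  refine Matrix.ext fun i j => ?_
  rw [Matrix.mul_apply, Finset.sum_eq_single (Fin.rev i)]
  · simp [revM]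
  · intro b _ hb
    simp [revM, (by exact fun h => hb h : ¬ b = Fin.rev i)]
  · simp

lemma mul_revM (m : ℕ) (M : Matrix (Fin m) (Fin m) ℝ) :
    M * revM m = M.submatrix id Fin.rev := by
  refine Matrix.ext fun i j => ?_
  rw [Matrix.mul_apply, Finset.sum_eq_single (Fin.rev j)]
  · simp [revM]
  · intro b _ hb
    have : ¬ (j = Fin.rev b) := by
      intro h; exact hb (by rw [h, Fin.rev_rev])
    simp [revM, this]
  · simp

lemma revM_revM (m : ℕ) : revM m * revM m = 1 := by
  rw [mul_revM]
  refine Matrix.ext fun i j => ?_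
  simp [revM, Matrix.one_apply, Fin.rev_rev, eq_comm]

def bfun (m : ℕ) (a : Fin m → ℝ) (t : ℕ) : ℝ :=
  if h : t < m then a ⟨t, h⟩ else if t = m then 1 else 0

def hankK (m : ℕ) (a : Fin m → ℝ) : Matrix (Fin m) (Fin m) ℝ :=
  Matrix.of fun i j => bfun m a ((i : ℕ) + (j : ℕ) + 1)

lemma bfun_small (m : ℕ) (a : Fin m → ℝ) (t : ℕ) (h : t < m) : bfun m a t = a ⟨t, h⟩ := by
  rw [bfun, dif_pos h]

lemma bfun_big (m : ℕ) (a : Fin m → ℝ) (t : ℕ) (h : ¬ t < m) :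
    bfun m a t = if t = m then 1 else 0 := by
  rw [bfun, dif_neg h]

lemma hankK_entry_lhs (m : ℕ) (a : Fin m → ℝ) (i j : Fin m) :
    (hankK m a * cmpn m a) i j
      = (if (j:ℕ) = 0 then 0 else bfun m a ((i:ℕ)+(j:ℕ)))
        - (if (i:ℕ) = 0 then a j else 0) := by
  have hm : 0 < m := i.pos
  rw [Matrix.mul_apply]
  have hsplit : ∀ k : Fin m, hankK m a i k * cmpn m a k j
      = (if (j:ℕ) = (k:ℕ)+1 then bfun m a ((i:ℕ)+(k:ℕ)+1) else 0)
        - (if (k:ℕ) = m-1 then bfun m a ((i:ℕ)+(k:ℕ)+1) * a j else 0) := by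
    intro k
    simp only [hankK, cmpn, Matrix.of_apply]
    rw [mul_sub]
    congr 1
    · rw [mul_ite, mul_one, mul_zero]
    · rw [mul_ite, mul_zero]
  rw [Finset.sum_congr rfl fun k _ => hsplit k, Finset.sum_sub_distrib]
  congr 1
  · by_cases hj : (j:ℕ) = 0
    · rw [if_pos hj]
      refine Finset.sum_eq_zero fun k _ => ?_
      rw [if_neg (by omega)]
    · rw [if_neg hj, Finset.sum_eq_single (⟨(j:ℕ)-1, by omega⟩ : Fin m)]
      · rw [if_pos (by simp; omega)]
        congr 1
        simp
        omega
      · intro b _ hb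
        refine if_neg fun hc => hb (Fin.ext ?_)
        simp
        omega
      · simp
  · rw [Finset.sum_eq_single (⟨m-1, by omega⟩ : Fin m)]
    · rw [if_pos (by simp)]
      have harg : (i:ℕ) + ((⟨m-1, by omega⟩ : Fin m):ℕ) + 1 = (i:ℕ) + m := by simp; omega
      rw [harg, bfun_big m a _ (by omega)]
      by_cases hi : (i:ℕ) = 0
      · rw [if_pos hi, if_pos (by omega), one_mul]
      · rw [if_neg hi, if_neg (by omega), zero_mul]
    · intro b _ hb
      refine if_neg fun hc => hb (Fin.ext (by simp; omega))
    · simp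

lemma hankK_entry_rhs (m : ℕ) (a : Fin m → ℝ) (i j : Fin m) :
    ((cmpn m a)ᵀ * hankK m a) i j
      = (if (i:ℕ) = 0 then 0 else bfun m a ((i:ℕ)+(j:ℕ)))
        - (if (j:ℕ) = 0 then a i else 0) := by
  have hm : 0 < m := i.pos
  rw [Matrix.mul_apply]
  have hsplit : ∀ k : Fin m, (cmpn m a)ᵀ i k * hankK m a k j
      = (if (i:ℕ) = (k:ℕ)+1 then bfun m a ((k:ℕ)+(j:ℕ)+1) else 0)
        - (if (k:ℕ) = m-1 then a i * bfun m a ((k:ℕ)+(j:ℕ)+1) else 0) := by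
    intro k
    simp only [hankK, cmpn, Matrix.of_apply, Matrix.transpose_apply]
    rw [sub_mul]
    congr 1
    · rw [ite_mul, one_mul, zero_mul]
    · rw [ite_mul, zero_mul]
  rw [Finset.sum_congr rfl fun k _ => hsplit k, Finset.sum_sub_distrib]
  congr 1
  · by_cases hi : (i:ℕ) = 0
    · rw [if_pos hi]
      refine Finset.sum_eq_zero fun k _ => ?_
      rw [if_neg (by omega)]
    · rw [if_neg hi, Finset.sum_eq_single (⟨(i:ℕ)-1, by omega⟩ : Fin m)]
      · rw [if_pos (by simp; omega)]
        congr 1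
        simp
        omega
      · intro b _ hb
        refine if_neg fun hc => hb (Fin.ext ?_)
        simp
        omega
      · simp
  · rw [Finset.sum_eq_single (⟨m-1, by omega⟩ : Fin m)]
    · rw [if_pos (by simp)]
      have harg : ((⟨m-1, by omega⟩ : Fin m):ℕ) + (j:ℕ) + 1 = m + (j:ℕ) := by simp; omega
      rw [harg, bfun_big m a _ (by omega)]
      by_cases hj : (j:ℕ) = 0
      · rw [if_pos hj, if_pos (by omega), mul_one]
      · rw [if_neg hj, if_neg (by omega), mul_zero]
    · intro b _ hb
      refine if_neg fun hc => hb (Fin.ext (by simp; omega))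
    · simp

lemma hankK_mul_cmpn (m : ℕ) (a : Fin m → ℝ) :
    hankK m a * cmpn m a = (cmpn m a)ᵀ * hankK m a := by
  refine Matrix.ext fun i j => ?_
  rw [hankK_entry_lhs, hankK_entry_rhs]
  by_cases hi : (i:ℕ) = 0 <;> by_cases hj : (j:ℕ) = 0
  · rw [if_pos hi, if_pos hj, if_pos hi, if_pos hj]
    have : i = j := Fin.ext (by omega)
    rw [this]
  · rw [if_pos hi, if_neg hj, if_neg hj, if_pos hi]
    have h1 : (i:ℕ) + (j:ℕ) < m := by omega
    rw [bfun_small m a _ (by omega)]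
    have : (⟨(i:ℕ)+(j:ℕ), by omega⟩ : Fin m) = j := Fin.ext (by simp; omega)
    rw [this]
    ring
  · rw [if_neg hi, if_pos hj, if_pos hj, if_neg hi]
    rw [bfun_small m a _ (by omega)]
    have : (⟨(i:ℕ)+(j:ℕ), by omega⟩ : Fin m) = i := Fin.ext (by simp; omega)
    rw [this]
    ring
  · rw [if_neg hi, if_neg hj, if_neg hi, if_neg hj]

lemma isUnit_hankK (m : ℕ) (a : Fin m → ℝ) : IsUnit (hankK m a) := by
  rw [Matrix.isUnit_iff_isUnit_det]
  have hperm := Matrix.det_permute (Fin.revPerm) (hankK m a)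
  have htri : ((hankK m a).submatrix (⇑Fin.revPerm) id).BlockTriangular OrderDual.toDual := by
    intro i j hij
    have hij' : (i:ℕ) < (j:ℕ) := hij
    simp only [Matrix.submatrix_apply, hankK, Matrix.of_apply, id, Fin.revPerm_apply]
    have hv : ((Fin.rev i : Fin m) : ℕ) = m - ((i:ℕ)+1) := Fin.val_rev i
    rw [bfun_big]
    · rw [if_neg (by omega)]
    · omega
  have hdiag : ∀ i : Fin m, ((hankK m a).submatrix (⇑Fin.revPerm) id) i i = 1 := by
    intro i
    simp only [Matrix.submatrix_apply, hankK, Matrix.of_apply, id, Fin.revPerm_apply]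
    have hv : ((Fin.rev i : Fin m) : ℕ) = m - ((i:ℕ)+1) := Fin.val_rev i
    have him : (i:ℕ) < m := i.isLt
    rw [bfun_big m a _ (by omega), if_pos (by omega)]
  have hdet1 : ((hankK m a).submatrix (⇑Fin.revPerm) id).det = 1 := by
    rw [Matrix.det_of_lowerTriangular _ htri, Finset.prod_congr rfl fun i _ => hdiag i]
    simp
  rw [hdet1] at hperm
  refine isUnit_iff_ne_zero.mpr fun h0 => ?_
  rw [h0] at hperm
  simp at hperm

end TLSAux6

/-- The TLS realization `Â_tls` (the companion/observer-canonical-form matrix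
built from the TLS solution `â_tls`, obtained from the last left singular vector of the
estimated Hankel matrix `Ĥ`) and the range-space realization `Â_R = (Ô⁺)⁻¹ Ô⁻` (from the
truncated SVD factor `Ô = Û₁ Ŝ₁^{1/2}`) are similar matrices; equivalently they have the same
characteristic polynomial, whose coefficients are the entries of `â_tls`. -/
theorem tls_realization_similar_to_range_space_realization
    (n p : ℕ)
    (Hhat : Matrix (Fin (n + 1)) (Fin (p + 1)) ℝ)
    (U : Matrix (Fin (n + 1)) (Fin (n + 1)) ℝ)
    (V : Matrix (Fin (p + 1)) (Fin (p + 1)) ℝ)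
    (σ : Fin (n + 1) → ℝ)
    (hU : Uᵀ * U = 1) (hV : Vᵀ * V = 1)
    (hσ_nonneg : ∀ i, 0 ≤ σ i)
    (hσ_mono : ∀ i j : Fin (n + 1), i ≤ j → σ j ≤ σ i)
    (S : Matrix (Fin (n + 1)) (Fin (p + 1)) ℝ)
    (hS : ∀ (i : Fin (n + 1)) (j : Fin (p + 1)), S i j = if (i : ℕ) = (j : ℕ) then σ i else 0)
    (hSVD : Hhat = U * S * Vᵀ)
    -- the truncated-SVD observability factor Ô = Û₁ Ŝ₁^{1/2}
    (O : Matrix (Fin (n + 1)) (Fin n) ℝ)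
    (hO : ∀ (i : Fin (n + 1)) (j : Fin n),
      O i j = U i (Fin.castSucc j) * Real.sqrt (σ (Fin.castSucc j)))
    (Op Om : Matrix (Fin n) (Fin n) ℝ)
    (hOp : ∀ (i j : Fin n), Op i j = O (Fin.castSucc i) j)
    (hOm : ∀ (i j : Fin n), Om i j = O (Fin.succ i) j)
    (hOpinv : IsUnit Op)
    (AR : Matrix (Fin n) (Fin n) ℝ) (hAR : AR = Op⁻¹ * Om)
    -- the TLS solution (E29): â_tls = [a_n, ..., a_1] from the last left singular vector
    (hu : U (Fin.last n) (Fin.last n) ≠ 0)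
    (atls : Fin n → ℝ)
    (hatls : ∀ j : Fin n,
      atls j = U (Fin.castSucc j) (Fin.last n) / U (Fin.last n) (Fin.last n))
    -- the companion (observer canonical form) matrix with first column -(â_1, ..., â_n)
    (Atls : Matrix (Fin n) (Fin n) ℝ)
    (hAtls : ∀ (i j : Fin n), Atls i j =
      if (j : ℕ) = 0 then -(atls ⟨n - 1 - (i : ℕ), by omega⟩)
      else if (j : ℕ) = (i : ℕ) + 1 then 1 else 0) :
    (∃ T : Matrix (Fin n) (Fin n) ℝ, IsUnit T ∧ Atls = T⁻¹ * AR * T) ∧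
    Atls.charpoly = AR.charpoly ∧
    (∀ j : Fin n, AR.charpoly.coeff (j : ℕ) = atls j) := by
  -- orthogonality of the last column of U against the first n columns
  have horth : ∀ j : Fin n,
      O (Fin.last n) j = -∑ k : Fin n, atls k * O (Fin.castSucc k) j := by
    intro j
    have hcol : ∑ i : Fin (n+1), U i (Fin.last n) * U i (Fin.castSucc j) = 0 := by
      have h1 := congrFun (congrFun hU (Fin.last n)) (Fin.castSucc j)
      rw [Matrix.mul_apply] at h1
      simp only [Matrix.transpose_apply] at h1
      rwa [Matrix.one_apply_ne (Fin.castSucc_lt_last j).ne'] at h1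
    have hsum : ∑ i : Fin (n+1), U i (Fin.last n) * O i j = 0 := by
      calc ∑ i : Fin (n+1), U i (Fin.last n) * O i j
          = (∑ i : Fin (n+1), U i (Fin.last n) * U i (Fin.castSucc j))
              * Real.sqrt (σ (Fin.castSucc j)) := by
            rw [Finset.sum_mul]
            refine Finset.sum_congr rfl fun i _ => ?_
            rw [hO]; ring
        _ = 0 := by rw [hcol, zero_mul]
    rw [Fin.sum_univ_castSucc] at hsum
    have hrw : ∑ k : Fin n, atls k * O (Fin.castSucc k) j
        = (∑ k : Fin n, U (Fin.castSucc k) (Fin.last n) * O (Fin.castSucc k) j)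
            / U (Fin.last n) (Fin.last n) := by
      rw [Finset.sum_div]
      refine Finset.sum_congr rfl fun k _ => ?_
      rw [hatls]; ring
    rw [hrw]
    field_simp
    linear_combination hsum
  -- Om = companion * Op
  have hOmC : Om = cmpn n atls * Op := by
    refine Matrix.ext fun i j => ?_
    rw [Matrix.mul_apply, hOm]
    by_cases hi : (i:ℕ) = n - 1
    · have hsucc : Fin.succ i = Fin.last n := Fin.ext (by simp [Fin.last]; omega)
      rw [hsucc, horth j]
      have hterm : ∀ k : Fin n, cmpn n atls i k * Op k j
          = -(atls k * O (Fin.castSucc k) j) := by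
        intro k
        rw [hOp]
        simp only [cmpn, Matrix.of_apply]
        rw [if_pos hi, if_neg (by omega)]
        ring
      rw [Finset.sum_congr rfl fun k _ => hterm k]
      rw [Finset.sum_neg_distrib]
    · have hlt : (i:ℕ) + 1 < n := by have := i.isLt; omega
      rw [Finset.sum_eq_single (⟨(i:ℕ)+1, hlt⟩ : Fin n)]
      · rw [hOp]
        have hcs : Fin.castSucc (⟨(i:ℕ)+1, hlt⟩ : Fin n) = Fin.succ i := Fin.ext (by simp)
        simp only [cmpn, Matrix.of_apply, hcs]
        rw [if_neg hi]
        simp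
      · intro b _ hb
        simp only [cmpn, Matrix.of_apply]
        rw [if_neg (fun hc => hb (Fin.ext hc)), if_neg hi]
        ring
      · simp
  have hARC : AR = Op⁻¹ * cmpn n atls * Op := by
    rw [hAR, hOmC, Matrix.mul_assoc]
  -- Atls = J * Cᵀ * J
  have hAtlsJ : Atls = revM n * (cmpn n atls)ᵀ * revM n := by
    rw [revM_mul, mul_revM, Matrix.submatrix_submatrix]
    refine Matrix.ext fun i j => ?_
    rw [hAtls]
    simp only [Matrix.submatrix_apply, Matrix.transpose_apply, cmpn, Matrix.of_apply,
      Function.comp_apply, id]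
    have hvi : ((Fin.rev i : Fin n) : ℕ) = n - ((i:ℕ)+1) := Fin.val_rev i
    have hvj : ((Fin.rev j : Fin n) : ℕ) = n - ((j:ℕ)+1) := Fin.val_rev j
    have him : (i:ℕ) < n := i.isLt
    have hjm : (j:ℕ) < n := j.isLt
    by_cases hj : (j:ℕ) = 0
    · rw [if_pos hj, if_neg (by omega), if_pos (by omega)]
      have harg : (⟨n - 1 - (i:ℕ), by omega⟩ : Fin n) = Fin.rev i := Fin.ext (by simp; omega)
      rw [harg, zero_sub]
    · by_cases hij : (j:ℕ) = (i:ℕ) + 1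
      · rw [if_neg hj, if_pos hij, if_pos (by omega), if_neg (by omega), sub_zero]
      · rw [if_neg hj, if_neg hij, if_neg (by omega), if_neg (by omega), sub_zero]
  -- units
  have hOpdet : IsUnit Op.det := (Matrix.isUnit_iff_isUnit_det Op).mp hOpinv
  have hK := isUnit_hankK n atls
  have hKdet : IsUnit (hankK n atls).det := (Matrix.isUnit_iff_isUnit_det _).mp hK
  have hJdet : (revM n).det * (revM n).det = 1 := by
    rw [← Matrix.det_mul, revM_revM, Matrix.det_one]
  have hJunit : IsUnit (revM n) :=
    (Matrix.isUnit_iff_isUnit_det _).mpr (IsUnit.of_mul_eq_one _ hJdet)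
  have hOpinvU : IsUnit Op⁻¹ :=
    (Matrix.isUnit_iff_isUnit_det _).mpr (Matrix.isUnit_nonsing_inv_det Op hOpdet)
  have hKinvU : IsUnit (hankK n atls)⁻¹ :=
    (Matrix.isUnit_iff_isUnit_det _).mpr (Matrix.isUnit_nonsing_inv_det _ hKdet)
  set T := Op⁻¹ * ((hankK n atls)⁻¹ * revM n) with hT
  have hTunit : IsUnit T := hOpinvU.mul (hKinvU.mul hJunit)
  have hTdet : IsUnit T.det := (Matrix.isUnit_iff_isUnit_det T).mp hTunit
  have hCK : cmpn n atls * (hankK n atls)⁻¹ = (hankK n atls)⁻¹ * (cmpn n atls)ᵀ := by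
    have h1 : (hankK n atls)⁻¹ * (hankK n atls * cmpn n atls) * (hankK n atls)⁻¹
        = cmpn n atls * (hankK n atls)⁻¹ := by
      rw [← Matrix.mul_assoc, Matrix.nonsing_inv_mul _ hKdet, Matrix.one_mul]
    rw [← h1, hankK_mul_cmpn, ← Matrix.mul_assoc, Matrix.mul_assoc _ (hankK n atls) _,
      Matrix.mul_nonsing_inv _ hKdet, Matrix.mul_one]
  have hWA : ((hankK n atls)⁻¹ * revM n) * Atls
      = cmpn n atls * ((hankK n atls)⁻¹ * revM n) := by
    rw [hAtlsJ]
    calc ((hankK n atls)⁻¹ * revM n) * (revM n * (cmpn n atls)ᵀ * revM n)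
        = (hankK n atls)⁻¹ * ((revM n * revM n) * (cmpn n atls)ᵀ) * revM n := by
          simp only [Matrix.mul_assoc]
      _ = (hankK n atls)⁻¹ * (cmpn n atls)ᵀ * revM n := by
          rw [revM_revM, Matrix.one_mul]
      _ = cmpn n atls * ((hankK n atls)⁻¹ * revM n) := by
          rw [← hCK, Matrix.mul_assoc]
  have hTA : AR * T = T * Atls := by
    rw [hARC, hT]
    calc (Op⁻¹ * cmpn n atls * Op) * (Op⁻¹ * ((hankK n atls)⁻¹ * revM n))
        = Op⁻¹ * cmpn n atls * (Op * Op⁻¹) * ((hankK n atls)⁻¹ * revM n) := by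
          simp only [Matrix.mul_assoc]
      _ = Op⁻¹ * (cmpn n atls * ((hankK n atls)⁻¹ * revM n)) := by
          rw [Matrix.mul_nonsing_inv _ hOpdet, Matrix.mul_one, Matrix.mul_assoc]
      _ = Op⁻¹ * (((hankK n atls)⁻¹ * revM n) * Atls) := by rw [hWA]
      _ = (Op⁻¹ * ((hankK n atls)⁻¹ * revM n)) * Atls := by
          simp only [Matrix.mul_assoc]
  have hsim : Atls = T⁻¹ * AR * T := by
    rw [Matrix.mul_assoc, hTA, ← Matrix.mul_assoc, Matrix.nonsing_inv_mul _ hTdet,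
      Matrix.one_mul]
  have hchar : AR.charpoly = (cmpn n atls).charpoly := by
    rw [hARC]; exact charpoly_conj' n Op _ hOpinv
  refine ⟨⟨T, hTunit, hsim⟩, ?_, ?_⟩
  · rw [hsim]; exact charpoly_conj' n T AR hTunit
  · intro j
    rw [hchar, charpoly_cmpn]
    exact coeff_cmp n atls j
end

section
/- (Golub–Van Loan sensitivity bound) If σ̂_{n_x}⁺ > σ̂_{n_x+1}, then the TLS and OLS solutions satisfy ‖â_tls - â_ols‖ ≤ ‖Ĥ⁻‖ ρ_ols / ((σ̂_{n_x}⁺)² - σ̂²_{n_x+1}), where ρ_ols = ‖Ĥ⁻ - â_ols Ĥ⁺‖. -/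
set_option maxHeartbeats 1000000
open Matrix

/-- The Euclidean norm of a finite real vector. -/
noncomputable def euclNorm {k : ℕ} (x : Fin k → ℝ) : ℝ := Real.sqrt (∑ i, x i ^ 2)

lemma euclNorm_nonneg {k : ℕ} (x : Fin k → ℝ) : 0 ≤ euclNorm x := Real.sqrt_nonneg _

lemma euclNorm_sq {k : ℕ} (x : Fin k → ℝ) : euclNorm x ^ 2 = ∑ i, x i ^ 2 :=
  Real.sq_sqrt (Finset.sum_nonneg fun i _ => sq_nonneg _)

lemma euclNorm_smul {k : ℕ} (c : ℝ) (hc : 0 ≤ c) (x : Fin k → ℝ) :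
    euclNorm (fun i => c * x i) = c * euclNorm x := by
  unfold euclNorm
  have h : (∑ i, (c * x i) ^ 2) = c ^ 2 * ∑ i, x i ^ 2 := by
    rw [Finset.mul_sum]; exact Finset.sum_congr rfl fun i _ => by ring
  rw [h, Real.sqrt_mul (sq_nonneg c), Real.sqrt_sq hc]

lemma dot_le_norm_mul_norm {k : ℕ} (x y : Fin k → ℝ) :
    ∑ i, x i * y i ≤ euclNorm x * euclNorm y := by
  have h := Finset.sum_mul_sq_le_sq_mul_sq Finset.univ x y
  have h2 : (∑ i, x i * y i) ^ 2 ≤ (euclNorm x * euclNorm y) ^ 2 := by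
    rw [mul_pow, euclNorm_sq, euclNorm_sq]; exact h
  exact le_of_sq_le_sq h2 (mul_nonneg (euclNorm_nonneg x) (euclNorm_nonneg y))

lemma euclNorm_sq_eq_dot {k : ℕ} (x : Fin k → ℝ) : euclNorm x ^ 2 = ∑ i, x i * x i := by
  rw [euclNorm_sq]; exact Finset.sum_congr rfl fun i _ => by ring

lemma euclNorm_eq_zero_iff {k : ℕ} (x : Fin k → ℝ) : euclNorm x = 0 ↔ x = 0 := by
  unfold euclNorm
  rw [Real.sqrt_eq_zero (Finset.sum_nonneg fun i _ => sq_nonneg _)]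
  constructor
  · intro h; funext i
    have := (Finset.sum_eq_zero_iff_of_nonneg (fun i _ => sq_nonneg (x i))).1 h i (Finset.mem_univ i)
    exact pow_eq_zero_iff (by norm_num) |>.1 this
  · intro h; rw [h]; simp

/-- The smallest singular value of a (wide) matrix `M : r × c` with `r ≤ c`, characterized as
the infimum of `‖xᵀM‖` over unit vectors `x`. -/
noncomputable def sminSV {r c : ℕ} (M : Matrix (Fin r) (Fin c) ℝ) : ℝ :=
  sInf {t | ∃ x : Fin r → ℝ, euclNorm x = 1 ∧ t = euclNorm (x ᵥ* M)}

lemma sminSV_nonneg {r c : ℕ} (M : Matrix (Fin r) (Fin c) ℝ) : 0 ≤ sminSV M := by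
  apply Real.sInf_nonneg
  rintro t ⟨x, -, rfl⟩; exact euclNorm_nonneg _

lemma sminSV_le {r c : ℕ} (M : Matrix (Fin r) (Fin c) ℝ) (x : Fin r → ℝ)
    (hx : euclNorm x = 1) : sminSV M ≤ euclNorm (x ᵥ* M) := by
  apply csInf_le
  · exact ⟨0, by rintro t ⟨y, -, rfl⟩; exact euclNorm_nonneg _⟩
  · exact ⟨x, hx, rfl⟩

lemma sminSV_mul_le {r c : ℕ} (M : Matrix (Fin r) (Fin c) ℝ) (x : Fin r → ℝ) :
    sminSV M * euclNorm x ≤ euclNorm (x ᵥ* M) := by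
  by_cases hx : x = 0
  · subst hx
    rw [(euclNorm_eq_zero_iff (0 : Fin r → ℝ)).2 rfl, mul_zero]
    exact euclNorm_nonneg _
  · have hn : 0 < euclNorm x :=
      lt_of_le_of_ne (euclNorm_nonneg x) (fun h => hx ((euclNorm_eq_zero_iff x).1 h.symm))
    set n := euclNorm x with hndef
    have hx' : euclNorm (fun i => n⁻¹ * x i) = 1 := by
      rw [euclNorm_smul _ (inv_nonneg.2 hn.le)]
      field_simp
      exact hndef.symm
    have h1 := sminSV_le M (fun i => n⁻¹ * x i) hx'
    have h2 : euclNorm ((fun i => n⁻¹ * x i) ᵥ* M) = n⁻¹ * euclNorm (x ᵥ* M) := by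
      have : ((fun i => n⁻¹ * x i) ᵥ* M) = fun j => n⁻¹ * (x ᵥ* M) j := by
        funext j
        simp [Matrix.vecMul, dotProduct, Finset.mul_sum, mul_assoc]
      rw [this, euclNorm_smul _ (inv_nonneg.2 hn.le)]
    rw [h2] at h1
    calc sminSV M * n ≤ (n⁻¹ * euclNorm (x ᵥ* M)) * n := mul_le_mul_of_nonneg_right h1 hn.le
      _ = euclNorm (x ᵥ* M) := by field_simp


lemma euclNorm_neg {k : ℕ} (x : Fin k → ℝ) : euclNorm (fun i => -x i) = euclNorm x := by
  unfold euclNorm; congr 1; exact Finset.sum_congr rfl fun i _ => by ring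

/-- Golub–Van Loan sensitivity bound: if `σ̂⁺_{n_x} > σ̂_{n_x+1}` then
`‖â_tls - â_ols‖ ≤ ‖Ĥ⁻‖ ρ_ols / ((σ̂⁺_{n_x})² - σ̂²_{n_x+1})`,
where `ρ_ols = ‖Ĥ⁻ - â_ols Ĥ⁺‖`. -/
theorem golub_van_loan_tls_ols_bound
    (nx p : ℕ)
    (Hp : Matrix (Fin nx) (Fin (p + 1)) ℝ)
    (Hm : Matrix (Fin 1) (Fin (p + 1)) ℝ)
    (H : Matrix (Fin (nx + 1)) (Fin (p + 1)) ℝ)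
    (hH : ∀ (i : Fin (nx + 1)) (j : Fin (p + 1)),
      H i j = if h : (i : ℕ) < nx then Hp ⟨i, h⟩ j else Hm 0 j)
    (σp σ : ℝ) (hσp : σp = sminSV Hp) (hσ : σ = sminSV H)
    (hgap : σ < σp)
    (aols atls : Matrix (Fin 1) (Fin nx) ℝ)
    (hols : aols = -(Hm * Hpᵀ * (Hp * Hpᵀ)⁻¹))
    (htls : atls = -(Hm * Hpᵀ * (Hp * Hpᵀ - σ ^ 2 • (1 : Matrix (Fin nx) (Fin nx) ℝ))⁻¹)) :
    euclNorm (fun j => (atls - aols) 0 j) ≤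
      euclNorm (fun j => Hm 0 j) * euclNorm (fun j => (Hm - aols * Hp) 0 j) /
        (σp ^ 2 - σ ^ 2) := by
  have hσ0 : 0 ≤ σ := hσ ▸ sminSV_nonneg H
  have hσp0 : 0 < σp := lt_of_le_of_lt hσ0 hgap
  have hgap2 : σ ^ 2 < σp ^ 2 := by nlinarith
  set ρ := euclNorm (fun j => (Hm - aols * Hp) 0 j) with hρ
  have hρ0 : 0 ≤ ρ := euclNorm_nonneg _
  set w : Fin (p + 1) → ℝ := fun j => Hm 0 j with hw
  have hw0 : 0 ≤ euclNorm w := euclNorm_nonneg _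
  -- Step 1: σ ≤ ρ
  have hσρ : σ ≤ ρ := by
    set v : Fin (nx + 1) → ℝ :=
      fun i => if h : (i : ℕ) < nx then -aols 0 ⟨i, h⟩ else 1 with hvdef
    have hvH : v ᵥ* H = fun j => (Hm - aols * Hp) 0 j := by
      funext j
      show ∑ i, v i * H i j = _
      rw [Fin.sum_univ_castSucc]
      have hlast : v (Fin.last nx) * H (Fin.last nx) j = Hm 0 j := by
        rw [hH]
        simp [hvdef, Fin.last]
      have hcast : ∀ i : Fin nx, v i.castSucc * H i.castSucc j = -aols 0 i * Hp i j := by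
        intro i
        rw [hH]
        have hi : ((i.castSucc : Fin (nx+1)) : ℕ) < nx := by simp [Fin.is_lt]
        rw [dif_pos hi]
        have : (⟨((i.castSucc : Fin (nx+1)) : ℕ), hi⟩ : Fin nx) = i := by
          apply Fin.ext; simp
        rw [this]
        simp [hvdef, dif_pos hi, this]
      rw [hlast, Finset.sum_congr rfl fun i _ => hcast i]
      simp [Matrix.sub_apply, Matrix.mul_apply]
      ring_nf
    have hv1 : 1 ≤ euclNorm v := by
      have h1 : (1 : ℝ) ≤ ∑ i, v i ^ 2 := by
        have : v (Fin.last nx) ^ 2 = 1 := by simp [hvdef, Fin.last]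
        calc (1:ℝ) = v (Fin.last nx) ^ 2 := this.symm
          _ ≤ ∑ i, v i ^ 2 :=
            Finset.single_le_sum (fun i _ => sq_nonneg (v i)) (Finset.mem_univ _)
      have := Real.sqrt_le_sqrt h1
      simpa [euclNorm] using this
    have hkey : σ * euclNorm v ≤ ρ := by
      have := sminSV_mul_le H v
      rw [hvH] at this
      rw [hσ]
      exact this.trans_eq rfl
    nlinarith
  -- Step 2: matrix algebra setup
  set B := Hp * Hpᵀ with hB
  set A := B - σ ^ 2 • (1 : Matrix (Fin nx) (Fin nx) ℝ) with hA
  have hBsym : Bᵀ = B := by rw [hB, transpose_mul, transpose_transpose]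
  have hAsym : Aᵀ = A := by rw [hA, transpose_sub, hBsym, transpose_smul, transpose_one]
  have hquadB : ∀ y : Fin nx → ℝ, y ⬝ᵥ (B *ᵥ y) = euclNorm (y ᵥ* Hp) ^ 2 := by
    intro y
    rw [euclNorm_sq_eq_dot, hB, ← mulVec_mulVec, dotProduct_mulVec, mulVec_transpose]
    rfl
  have hself : ∀ y : Fin nx → ℝ, y ⬝ᵥ y = euclNorm y ^ 2 := by
    intro y; rw [euclNorm_sq_eq_dot]; rfl
  have hqB : ∀ y : Fin nx → ℝ, σp ^ 2 * euclNorm y ^ 2 ≤ y ⬝ᵥ (B *ᵥ y) := by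
    intro y
    rw [hquadB y]
    have h1 := sminSV_mul_le Hp y
    rw [← hσp] at h1
    have h2 := mul_le_mul h1 h1 (mul_nonneg hσp0.le (euclNorm_nonneg y)) (euclNorm_nonneg _)
    nlinarith [h2]
  have hnz : ∀ y : Fin nx → ℝ, euclNorm y = 0 → y = 0 := fun y h =>
    (euclNorm_eq_zero_iff y).1 h
  have hAq : ∀ y : Fin nx → ℝ, A *ᵥ y = B *ᵥ y - σ ^ 2 • y := by
    intro y; rw [hA, sub_mulVec, smul_mulVec, one_mulVec]
  have hBdet : IsUnit B.det := by
    rw [← Matrix.isUnit_iff_isUnit_det, ← Matrix.mulVec_injective_iff_isUnit]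
    intro y1 y2 h
    have h0 : B *ᵥ (y1 - y2) = 0 := by rw [Matrix.mulVec_sub, h, sub_self]
    have h1 := hqB (y1 - y2)
    rw [h0] at h1
    simp only [dotProduct_zero] at h1
    have ht : euclNorm (y1 - y2) ^ 2 ≤ 0 := by nlinarith [pow_pos hσp0 2]
    have ht2 : euclNorm (y1 - y2) ^ 2 = 0 := le_antisymm ht (sq_nonneg _)
    exact sub_eq_zero.1 (hnz _ (pow_eq_zero_iff two_ne_zero |>.1 ht2))
  have hAdet : IsUnit A.det := by
    rw [← Matrix.isUnit_iff_isUnit_det, ← Matrix.mulVec_injective_iff_isUnit]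
    intro y1 y2 h
    have h0 : A *ᵥ (y1 - y2) = 0 := by rw [Matrix.mulVec_sub, h, sub_self]
    set y := y1 - y2 with hy
    have h1 : y ⬝ᵥ (A *ᵥ y) = 0 := by rw [h0, dotProduct_zero]
    rw [hAq y, dotProduct_sub, dotProduct_smul, hself y, smul_eq_mul] at h1
    have h2 := hqB y
    have ht : euclNorm y ^ 2 ≤ 0 := by nlinarith [pow_pos (sub_pos.2 hgap2) 1]
    have ht2 : euclNorm y ^ 2 = 0 := le_antisymm ht (sq_nonneg _)
    exact sub_eq_zero.1 (hnz _ (pow_eq_zero_iff two_ne_zero |>.1 ht2))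
  have hid : A⁻¹ - B⁻¹ = σ ^ 2 • (A⁻¹ * B⁻¹) := by
    have h1 : A⁻¹ * (B - A) * B⁻¹ = A⁻¹ - B⁻¹ := by
      rw [Matrix.mul_sub, Matrix.nonsing_inv_mul A hAdet, Matrix.sub_mul, Matrix.one_mul,
        Matrix.mul_assoc, Matrix.mul_nonsing_inv B hBdet, Matrix.mul_one]
    have h2 : B - A = σ ^ 2 • (1 : Matrix (Fin nx) (Fin nx) ℝ) := by
      rw [hA, sub_sub_cancel]
    rw [h2] at h1
    rw [← h1, Matrix.mul_smul, Matrix.mul_one, Matrix.smul_mul]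
  have hDiff : atls - aols = -(σ ^ 2 • (Hm * Hpᵀ * (A⁻¹ * B⁻¹))) := by
    rw [htls, hols]
    have h3 : -(Hm * Hpᵀ * A⁻¹) - -(Hm * Hpᵀ * B⁻¹) = -(Hm * Hpᵀ * (A⁻¹ - B⁻¹)) := by
      rw [Matrix.mul_sub]; abel
    rw [h3, hid, Matrix.mul_smul]
  set z : Fin nx → ℝ := B⁻¹ *ᵥ (A⁻¹ *ᵥ (Hp *ᵥ w)) with hz
  have hDz : (fun j => (atls - aols) 0 j) = fun j => -(σ ^ 2 * z j) := by
    funext j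
    rw [hDiff]
    have hT : Hm * Hpᵀ * (A⁻¹ * B⁻¹) = (B⁻¹ * A⁻¹ * Hp * Hmᵀ)ᵀ := by
      simp only [transpose_mul, transpose_nonsing_inv, hAsym, hBsym, transpose_transpose,
        Matrix.mul_assoc]
    rw [Matrix.neg_apply, Matrix.smul_apply, smul_eq_mul, hT, Matrix.transpose_apply]
    congr 1
    rw [hz, Matrix.mulVec_mulVec, Matrix.mulVec_mulVec]
    simp [Matrix.mul_apply, Matrix.mulVec, dotProduct, hw]
  have hLHS : euclNorm (fun j => (atls - aols) 0 j) = σ ^ 2 * euclNorm z := by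
    rw [hDz, euclNorm_neg (fun j => σ ^ 2 * z j), euclNorm_smul _ (sq_nonneg σ)]
  set u := Hp *ᵥ w with hu
  have hABz : A *ᵥ (B *ᵥ z) = u := by
    have hM : A * B * B⁻¹ * A⁻¹ = 1 := by
      rw [Matrix.mul_assoc A B B⁻¹, Matrix.mul_nonsing_inv B hBdet, Matrix.mul_one,
        Matrix.mul_nonsing_inv A hAdet]
    rw [hz, Matrix.mulVec_mulVec, Matrix.mulVec_mulVec, Matrix.mulVec_mulVec, hM,
      Matrix.one_mulVec]
  set s := euclNorm (z ᵥ* Hp) with hs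
  have hs0 : 0 ≤ s := euclNorm_nonneg _
  have hz0 : 0 ≤ euclNorm z := euclNorm_nonneg z
  have f1 : σp * euclNorm z ≤ s := by
    rw [hs, hσp]; exact sminSV_mul_le Hp z
  have f2 : z ⬝ᵥ (B *ᵥ z) = s ^ 2 := by rw [hquadB z, hs]
  have f3 : s ^ 2 ≤ euclNorm z * euclNorm (B *ᵥ z) := by
    rw [← f2]
    exact dot_le_norm_mul_norm z (B *ᵥ z)
  have f4 : σp * s ≤ euclNorm (B *ᵥ z) := by
    by_cases hzz : euclNorm z = 0
    · have : z = 0 := hnz z hzz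
      have hszero : s = 0 := by
        rw [hs, this]
        rw [Matrix.zero_vecMul]
        exact (euclNorm_eq_zero_iff _).2 rfl
      rw [hszero, mul_zero]
      exact euclNorm_nonneg _
    · have hzpos : 0 < euclNorm z := lt_of_le_of_ne hz0 (Ne.symm hzz)
      nlinarith [mul_le_mul_of_nonneg_left f1 hs0, f3, euclNorm_nonneg (B *ᵥ z)]
  have f5 : z ⬝ᵥ u = euclNorm (B *ᵥ z) ^ 2 - σ ^ 2 * s ^ 2 := by
    rw [← hABz, hAq (B *ᵥ z), dotProduct_sub, dotProduct_smul, f2, smul_eq_mul]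
    congr 1
    rw [Matrix.dotProduct_mulVec, show z ᵥ* B = B *ᵥ z by rw [← hBsym, vecMul_transpose, hBsym]]
    rw [euclNorm_sq_eq_dot]
    rfl
  have f6 : z ⬝ᵥ u ≤ s * euclNorm w := by
    rw [hu, Matrix.dotProduct_mulVec]
    exact dot_le_norm_mul_norm (z ᵥ* Hp) w
  have f7 : (σp ^ 2 - σ ^ 2) * s ^ 2 ≤ s * euclNorm w := by
    nlinarith [f4, f5, f6, hs0, mul_nonneg hσp0.le hs0]
  have hd : 0 < σp * (σp ^ 2 - σ ^ 2) := by nlinarith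
  have f8 : euclNorm z ≤ euclNorm w / (σp * (σp ^ 2 - σ ^ 2)) := by
    by_cases hss : s = 0
    · have : euclNorm z = 0 := by nlinarith [f1]
      rw [this]
      positivity
    · have hspos : 0 < s := lt_of_le_of_ne hs0 (Ne.symm hss)
      rw [le_div_iff₀ hd]
      nlinarith [mul_le_mul_of_nonneg_right f1 (sub_nonneg.2 hgap2.le), f7, hspos]
  rw [hLHS]
  have hσ2 : σ ^ 2 ≤ σp * ρ := by nlinarith
  calc σ ^ 2 * euclNorm z
      ≤ (σp * ρ) * (euclNorm w / (σp * (σp ^ 2 - σ ^ 2))) :=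
        mul_le_mul hσ2 f8 hz0 (mul_nonneg hσp0.le hρ0)
    _ = euclNorm w * ρ / (σp ^ 2 - σ ^ 2) := by
        have hne : σp ≠ 0 := hσp0.ne'
        have hne2 : σp ^ 2 - σ ^ 2 ≠ 0 := (sub_pos.2 hgap2).ne'
        field_simp
end

section
/- (Wedin pseudo-inverse perturbation bound) Let M₁, M₂ ∈ ℝ^{m×n} with m ≤ n both have full row rank m. Then ‖M₁† - M₂†‖ ≤ √2 ‖M₁†‖ ‖M₂†‖ ‖M₁ - M₂‖, where † denotes the Moore–Penrose pseudo-inverse and ‖·‖ the spectral norm. -/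
open Matrix
open scoped Matrix.Norms.L2Operator

lemma wedin_aux_isUnit {m n : ℕ} (M : Matrix (Fin m) (Fin n) ℝ) (h : M.rank = m) :
    IsUnit (M * Mᵀ) := by
  rw [← Matrix.mulVec_surjective_iff_isUnit]
  have hr : (M * Mᵀ).rank = Fintype.card (Fin m) := by
    rw [Matrix.rank_self_mul_transpose, h, Fintype.card_fin]
  have htop : LinearMap.range (M * Mᵀ).mulVecLin = ⊤ := by
    apply Submodule.eq_top_of_finrank_eq
    rw [Matrix.rank] at hr
    rw [hr, Module.finrank_fintype_fun_eq_card]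
  intro y
  obtain ⟨x, hx⟩ := LinearMap.range_eq_top.mp htop y
  exact ⟨x, hx⟩

lemma wedin_pyth {n : ℕ} (Q : Matrix (Fin n) (Fin n) ℝ) (hsym : Qᵀ = Q) (hidem : Q * Q = Q)
    (y : EuclideanSpace ℝ (Fin n)) :
    ‖y‖ ^ 2 = ‖(WithLp.equiv 2 (Fin n → ℝ)).symm (Q *ᵥ (WithLp.equiv 2 _ y))‖ ^ 2
      + ‖(WithLp.equiv 2 (Fin n → ℝ)).symm ((1 - Q) *ᵥ (WithLp.equiv 2 _ y))‖ ^ 2 := by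
  set w := (WithLp.equiv 2 (Fin n → ℝ)) y with hw
  set u := (WithLp.equiv 2 (Fin n → ℝ)).symm (Q *ᵥ w)
  set v := (WithLp.equiv 2 (Fin n → ℝ)).symm ((1 - Q) *ᵥ w)
  have huv : u + v = y := by
    simp only [u, v, WithLp.equiv_symm_apply, ← WithLp.toLp_add, ← Matrix.add_mulVec, add_sub_cancel,
      Matrix.one_mulVec]
    simp [hw]
  have hinner : inner ℝ u v = (0 : ℝ) := by
    rw [show inner ℝ u v = dotProduct ((1 - Q) *ᵥ w) (star (Q *ᵥ w)) from rfl, dotProduct_comm,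
      star_trivial]
    rw [Matrix.dotProduct_mulVec, ← Matrix.mulVec_transpose, Matrix.mulVec_mulVec]
    have h0 : (1 - Q)ᵀ * Q = 0 := by
      rw [Matrix.transpose_sub, Matrix.transpose_one, hsym, Matrix.sub_mul, Matrix.one_mul,
        hidem, sub_self]
    rw [h0, Matrix.zero_mulVec, zero_dotProduct]
  calc ‖y‖ ^ 2 = ‖u + v‖ ^ 2 := by rw [huv]
    _ = ‖u‖ ^ 2 + 2 * inner ℝ u v + ‖v‖ ^ 2 := norm_add_sq_real u v
    _ = ‖u‖ ^ 2 + ‖v‖ ^ 2 := by rw [hinner]; ring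

lemma wedin_opnorm_sq_le {n k : ℕ} (Q : Matrix (Fin n) (Fin n) ℝ) (hsym : Qᵀ = Q)
    (hidem : Q * Q = Q) (A : Matrix (Fin n) (Fin k) ℝ) :
    ‖A‖ ^ 2 ≤ ‖Q * A‖ ^ 2 + ‖(1 - Q) * A‖ ^ 2 := by
  set s := ‖Q * A‖ ^ 2 + ‖(1 - Q) * A‖ ^ 2 with hs
  have hs0 : 0 ≤ s := by positivity
  have hA : ‖A‖ ≤ Real.sqrt s := by
    rw [Matrix.l2_opNorm_def]
    apply ContinuousLinearMap.opNorm_le_bound _ (Real.sqrt_nonneg _)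
    intro x
    have hfx : ((Matrix.toEuclideanLin.trans LinearMap.toContinuousLinearMap) A) x
        = Matrix.toEuclideanLin A x := rfl
    rw [hfx, Matrix.toEuclideanLin_apply]
    set y := (WithLp.equiv 2 (Fin n → ℝ)).symm (A *ᵥ (WithLp.equiv 2 _ x)) with hy
    have hpy := wedin_pyth Q hsym hidem y
    have h1 : (WithLp.equiv 2 (Fin n → ℝ)).symm (Q *ᵥ (WithLp.equiv 2 _ y))
        = Matrix.toEuclideanLin (Q * A) x := by
      rw [Matrix.toEuclideanLin_apply, hy, Equiv.apply_symm_apply, Matrix.mulVec_mulVec]; rfl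
    have h2 : (WithLp.equiv 2 (Fin n → ℝ)).symm ((1 - Q) *ᵥ (WithLp.equiv 2 _ y))
        = Matrix.toEuclideanLin ((1 - Q) * A) x := by
      rw [Matrix.toEuclideanLin_apply, hy, Equiv.apply_symm_apply, Matrix.mulVec_mulVec]; rfl
    rw [h1, h2] at hpy
    have b1 : ‖Matrix.toEuclideanLin (Q * A) x‖ ≤ ‖Q * A‖ * ‖x‖ := by
      rw [Matrix.toEuclideanLin_apply]
      exact Matrix.l2_opNorm_mulVec (Q * A) x
    have b2 : ‖Matrix.toEuclideanLin ((1 - Q) * A) x‖ ≤ ‖(1 - Q) * A‖ * ‖x‖ := by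
      rw [Matrix.toEuclideanLin_apply]
      exact Matrix.l2_opNorm_mulVec ((1 - Q) * A) x
    have hyx : ‖y‖ ^ 2 ≤ s * ‖x‖ ^ 2 := by
      rw [hpy, hs]
      have := norm_nonneg (Matrix.toEuclideanLin (Q * A) x)
      have := norm_nonneg (Matrix.toEuclideanLin ((1 - Q) * A) x)
      have := norm_nonneg x
      have hq := norm_nonneg (Q * A)
      have hq2 := norm_nonneg ((1 - Q) * A)
      nlinarith
    calc ‖y‖ = Real.sqrt (‖y‖ ^ 2) := (Real.sqrt_sq (norm_nonneg _)).symm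
      _ ≤ Real.sqrt (s * ‖x‖ ^ 2) := Real.sqrt_le_sqrt hyx
      _ = Real.sqrt s * ‖x‖ := by
          rw [Real.sqrt_mul hs0, Real.sqrt_sq (norm_nonneg _)]
  calc ‖A‖ ^ 2 ≤ Real.sqrt s ^ 2 := by
        have := norm_nonneg A
        nlinarith [Real.sqrt_nonneg s]
    _ = s := Real.sq_sqrt hs0

lemma wedin_proj_norm_le {n : ℕ} (Q : Matrix (Fin n) (Fin n) ℝ) (hsym : Qᵀ = Q)
    (hidem : Q * Q = Q) : ‖Q‖ ≤ 1 := by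
  rw [Matrix.l2_opNorm_def]
  apply ContinuousLinearMap.opNorm_le_bound _ zero_le_one
  intro x
  have hfx : ((Matrix.toEuclideanLin.trans LinearMap.toContinuousLinearMap) Q) x
      = (WithLp.equiv 2 (Fin n → ℝ)).symm (Q *ᵥ (WithLp.equiv 2 _ x)) := by
    exact Matrix.toEuclideanLin_apply Q x
  rw [hfx, one_mul]
  have hpy := wedin_pyth Q hsym hidem x
  have h2 : 0 ≤ ‖(WithLp.equiv 2 (Fin n → ℝ)).symm ((1 - Q) *ᵥ (WithLp.equiv 2 _ x))‖ ^ 2 := by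
    positivity
  nlinarith [norm_nonneg ((WithLp.equiv 2 (Fin n → ℝ)).symm (Q *ᵥ (WithLp.equiv 2 _ x))),
    norm_nonneg x]

set_option maxHeartbeats 1000000 in
lemma wedin_key {m n : ℕ} (M₁ M₂ : Matrix (Fin m) (Fin n) ℝ)
    (h₁ : IsUnit (M₁ * M₁ᵀ)) (h₂ : IsUnit (M₂ * M₂ᵀ))
    (P₁ P₂ : Matrix (Fin n) (Fin m) ℝ)
    (hP₁ : P₁ = M₁ᵀ * (M₁ * M₁ᵀ)⁻¹) (hP₂ : P₂ = M₂ᵀ * (M₂ * M₂ᵀ)⁻¹) :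
    ‖P₁ - P₂‖ ^ 2 ≤ (‖P₁‖ * ‖P₂‖ * ‖M₁ - M₂‖) ^ 2 + (‖P₂‖ ^ 2 * ‖M₁ - M₂‖) ^ 2 := by
  have hd₁ := (Matrix.isUnit_iff_isUnit_det _).mp h₁
  have hd₂ := (Matrix.isUnit_iff_isUnit_det _).mp h₂
  have hmul₁ : (M₁ * M₁ᵀ) * (M₁ * M₁ᵀ)⁻¹ = 1 := Matrix.mul_nonsing_inv _ hd₁
  have hmul₂ : (M₂ * M₂ᵀ) * (M₂ * M₂ᵀ)⁻¹ = 1 := Matrix.mul_nonsing_inv _ hd₂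
  have hinv₁ : (M₁ * M₁ᵀ)⁻¹ * (M₁ * M₁ᵀ) = 1 := Matrix.nonsing_inv_mul _ hd₁
  have hinv₂ : (M₂ * M₂ᵀ)⁻¹ * (M₂ * M₂ᵀ) = 1 := Matrix.nonsing_inv_mul _ hd₂
  have hMP₁ : M₁ * P₁ = 1 := by rw [hP₁, ← Matrix.mul_assoc, hmul₁]
  have hMP₂ : M₂ * P₂ = 1 := by rw [hP₂, ← Matrix.mul_assoc, hmul₂]
  have hsyminv₁ : ((M₁ * M₁ᵀ)⁻¹)ᵀ = (M₁ * M₁ᵀ)⁻¹ := by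
    rw [Matrix.transpose_nonsing_inv, Matrix.transpose_mul, Matrix.transpose_transpose]
  have hsyminv₂ : ((M₂ * M₂ᵀ)⁻¹)ᵀ = (M₂ * M₂ᵀ)⁻¹ := by
    rw [Matrix.transpose_nonsing_inv, Matrix.transpose_mul, Matrix.transpose_transpose]
  have hP₁t : P₁ᵀ = (M₁ * M₁ᵀ)⁻¹ * M₁ := by
    rw [hP₁, Matrix.transpose_mul, hsyminv₁, Matrix.transpose_transpose]
  have hP₂t : P₂ᵀ = (M₂ * M₂ᵀ)⁻¹ * M₂ := by
    rw [hP₂, Matrix.transpose_mul, hsyminv₂, Matrix.transpose_transpose]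
  have hPP₂ : P₂ᵀ * P₂ = (M₂ * M₂ᵀ)⁻¹ := by
    rw [hP₂t, hP₂, Matrix.mul_assoc, ← Matrix.mul_assoc M₂, ← Matrix.mul_assoc, Matrix.mul_assoc
      ((M₂ * M₂ᵀ)⁻¹), hmul₂, Matrix.mul_one]
  set Q := P₁ * M₁ with hQ
  have hQsym : Qᵀ = Q := by
    rw [hQ, Matrix.transpose_mul, hP₁t, hP₁, Matrix.mul_assoc]
  have hQidem : Q * Q = Q := by
    rw [hQ, Matrix.mul_assoc, ← Matrix.mul_assoc M₁, hMP₁, Matrix.one_mul]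
  have hz1 : (1 - Q) * P₁ = 0 := by
    rw [Matrix.sub_mul, Matrix.one_mul, hQ, Matrix.mul_assoc, hMP₁, Matrix.mul_one, sub_self]
  have hz2 : (1 - Q) * M₁ᵀ = 0 := by
    rw [Matrix.sub_mul, Matrix.one_mul, hQ, Matrix.mul_assoc, hP₁, Matrix.mul_assoc,
      hinv₁, Matrix.mul_one, sub_self]
  have hP₂eq : P₂ = M₂ᵀ * (P₂ᵀ * P₂) := by rw [hPP₂, ← hP₂]
  have hQd : Q * (P₁ - P₂) = P₁ * (M₂ - M₁) * P₂ := by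
    simp only [hQ, Matrix.mul_sub, Matrix.sub_mul, Matrix.mul_assoc, hMP₁, hMP₂, Matrix.mul_one]
  have h1Qd : (1 - Q) * (P₁ - P₂) = ((1 - Q) * (M₁ - M₂)ᵀ) * (P₂ᵀ * P₂) := by
    calc (1 - Q) * (P₁ - P₂) = (1 - Q) * P₁ - (1 - Q) * (M₂ᵀ * (P₂ᵀ * P₂)) := by
          rw [Matrix.mul_sub, ← hP₂eq]
      _ = (1 - Q) * M₁ᵀ * (P₂ᵀ * P₂) - (1 - Q) * M₂ᵀ * (P₂ᵀ * P₂) := by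
          rw [hz1, hz2, Matrix.zero_mul, Matrix.mul_assoc]
      _ = ((1 - Q) * (M₁ - M₂)ᵀ) * (P₂ᵀ * P₂) := by
          simp only [Matrix.transpose_sub, Matrix.mul_sub, Matrix.sub_mul]
  have e1 : ‖Q * (P₁ - P₂)‖ ≤ ‖P₁‖ * ‖P₂‖ * ‖M₁ - M₂‖ := by
    rw [hQd]
    calc ‖P₁ * (M₂ - M₁) * P₂‖ ≤ ‖P₁ * (M₂ - M₁)‖ * ‖P₂‖ := Matrix.l2_opNorm_mul _ _
      _ ≤ ‖P₁‖ * ‖M₂ - M₁‖ * ‖P₂‖ := by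
          have h := Matrix.l2_opNorm_mul P₁ (M₂ - M₁)
          have h2 := norm_nonneg P₂
          nlinarith
      _ = ‖P₁‖ * ‖P₂‖ * ‖M₁ - M₂‖ := by rw [norm_sub_rev]; ring
  have e2 : ‖(1 - Q) * (P₁ - P₂)‖ ≤ ‖P₂‖ ^ 2 * ‖M₁ - M₂‖ := by
    rw [h1Qd]
    have ht : ‖(M₁ - M₂)ᵀ‖ = ‖M₁ - M₂‖ := by
      rw [← Matrix.conjTranspose_eq_transpose_of_trivial]
      exact Matrix.l2_opNorm_conjTranspose _
    have hpp : ‖P₂ᵀ * P₂‖ = ‖P₂‖ * ‖P₂‖ := by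
      rw [← Matrix.conjTranspose_eq_transpose_of_trivial]
      exact Matrix.l2_opNorm_conjTranspose_mul_self _
    have hq1 : ‖(1 - Q) * (M₁ - M₂)ᵀ‖ ≤ ‖M₁ - M₂‖ := by
      have h1Q : ‖(1 : Matrix (Fin n) (Fin n) ℝ) - Q‖ ≤ 1 := by
        apply wedin_proj_norm_le
        · rw [Matrix.transpose_sub, Matrix.transpose_one, hQsym]
        · simp only [Matrix.sub_mul, Matrix.mul_sub, Matrix.one_mul, Matrix.mul_one, hQidem]
          abel
      calc ‖(1 - Q) * (M₁ - M₂)ᵀ‖ ≤ ‖(1 : Matrix (Fin n) (Fin n) ℝ) - Q‖ * ‖(M₁ - M₂)ᵀ‖ :=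
            Matrix.l2_opNorm_mul _ _
        _ ≤ ‖M₁ - M₂‖ := by
            rw [ht]
            nlinarith [norm_nonneg ((M₁ - M₂) : Matrix (Fin m) (Fin n) ℝ),
              norm_nonneg ((1 : Matrix (Fin n) (Fin n) ℝ) - Q)]
    calc ‖(1 - Q) * (M₁ - M₂)ᵀ * (P₂ᵀ * P₂)‖ ≤ ‖(1 - Q) * (M₁ - M₂)ᵀ‖ * ‖P₂ᵀ * P₂‖ :=
          Matrix.l2_opNorm_mul _ _
      _ ≤ ‖P₂‖ ^ 2 * ‖M₁ - M₂‖ := by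
          rw [hpp]
          nlinarith [norm_nonneg (P₂ᵀ * P₂), norm_nonneg P₂, norm_nonneg (M₁ - M₂),
            norm_nonneg ((1 - Q) * (M₁ - M₂)ᵀ)]
  have hsq := wedin_opnorm_sq_le Q hQsym hQidem (P₁ - P₂)
  nlinarith [norm_nonneg (Q * (P₁ - P₂)), norm_nonneg ((1 - Q) * (P₁ - P₂)),
    norm_nonneg P₁, norm_nonneg P₂, norm_nonneg (M₁ - M₂)]

/-- Wedin pseudo-inverse perturbation bound: if `M₁, M₂ : m × n` (`m ≤ n`)
both have full row rank `m`, then `‖M₁† - M₂†‖ ≤ √2 ‖M₁†‖ ‖M₂†‖ ‖M₁ - M₂‖` in the spectral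
norm, where `M† = Mᵀ(MMᵀ)⁻¹` is the Moore–Penrose pseudo-inverse of a full-row-rank matrix. -/
theorem wedin_pseudoinverse_perturbation
    (m n : ℕ) (hmn : m ≤ n)
    (M₁ M₂ : Matrix (Fin m) (Fin n) ℝ)
    (h₁ : M₁.rank = m) (h₂ : M₂.rank = m)
    (P₁ P₂ : Matrix (Fin n) (Fin m) ℝ)
    (hP₁ : P₁ = M₁ᵀ * (M₁ * M₁ᵀ)⁻¹)
    (hP₂ : P₂ = M₂ᵀ * (M₂ * M₂ᵀ)⁻¹) :
    ‖P₁ - P₂‖ ≤ Real.sqrt 2 * ‖P₁‖ * ‖P₂‖ * ‖M₁ - M₂‖ := by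
  have hu₁ := wedin_aux_isUnit M₁ h₁
  have hu₂ := wedin_aux_isUnit M₂ h₂
  have k₁ := wedin_key M₁ M₂ hu₁ hu₂ P₁ P₂ hP₁ hP₂
  have k₂ := wedin_key M₂ M₁ hu₂ hu₁ P₂ P₁ hP₂ hP₁
  rw [norm_sub_rev P₂ P₁, norm_sub_rev M₂ M₁] at k₂
  set a := ‖P₁‖ with ha
  set b := ‖P₂‖ with hb
  set e := ‖M₁ - M₂‖ with he
  have ha0 : 0 ≤ a := norm_nonneg _
  have hb0 : 0 ≤ b := norm_nonneg _
  have he0 : 0 ≤ e := norm_nonneg _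
  have hsq : ‖P₁ - P₂‖ ^ 2 ≤ 2 * (a * b * e) ^ 2 := by
    rcases le_total a b with hab | hab
    · -- a ≤ b, use k₂ : ≤ (b*a*e)^2 + (a^2*e)^2
      nlinarith [k₂]
    · nlinarith [k₁]
  have hfin : ‖P₁ - P₂‖ ≤ Real.sqrt 2 * (a * b * e) := by
    calc ‖P₁ - P₂‖ = Real.sqrt (‖P₁ - P₂‖ ^ 2) := (Real.sqrt_sq (norm_nonneg _)).symm
      _ ≤ Real.sqrt (2 * (a * b * e) ^ 2) := Real.sqrt_le_sqrt hsq
      _ = Real.sqrt 2 * (a * b * e) := by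
          rw [Real.sqrt_mul (by norm_num), Real.sqrt_sq (by positivity)]
  calc ‖P₁ - P₂‖ ≤ Real.sqrt 2 * (a * b * e) := hfin
    _ = Real.sqrt 2 * a * b * e := by ring
end
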